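/- Suppose A = WΛW* and P = WΣW* share the orthogonal eigenvector matrix W, with Λ, Σ diagonal, Σ positive definite, eigenvalues of A contained in [a,b] avoiding 0 and 1. If x_{j+1} = A·x_j + b for j < k and x_{k+1} comes from one step of Anderson acceleration in the weighted norm ‖P·‖₂ with memory m, then ‖Σ·D_μ⁻¹·W*·e_{k+1}‖₂ ≤ (max_i |Σ_{ii}|)·C(a,b,m)·‖D_μ⁻¹·W*·A·e_k‖₂, where C(a,b,m) = |T_m((2ab − a − b)/(b − a))|⁻¹. -/

import Mathlib

open Matrix Polynomial Polynomial.Chebyshev Finset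

theorem chebKey (x : ℝ) (i : ℤ) : (T ℝ (i+2)).eval x = 2*x*(T ℝ (i+1)).eval x - (T ℝ i).eval x := by
  have := congrArg (Polynomial.eval x) (T_add_two ℝ i)
  simpa using this

theorem chebGrow (x : ℝ) (hx : 1 ≤ x) : ∀ j : ℕ,
    1 ≤ (T ℝ j).eval x ∧ (T ℝ j).eval x ≤ (T ℝ (j+1)).eval x := by
  intro j
  induction j using Nat.twoStepInduction with
  | zero => simp [T_zero, T_one, hx]
  | one =>
    constructor
    · simp [T_one, hx]
    · have h2 := chebKey x 0
      norm_num at h2 ⊢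
      rw [h2]
      nlinarith [sq_nonneg (x-1)]
  | more j ih1 ih2 =>
    obtain ⟨hj1, hj12⟩ := ih1
    obtain ⟨hj2, hj23⟩ := ih2
    push_cast at hj2 hj23 ⊢
    have e : ((j:ℤ)+1+1) = (j:ℤ)+2 := by ring
    rw [e] at hj23
    have k1 := chebKey x j
    constructor
    · rw [k1]; nlinarith
    · have e2 : ((j:ℤ)+2+1) = ((j:ℤ)+1)+2 := by ring
      rw [e2, chebKey x ((j:ℤ)+1), e, k1]
      nlinarith

theorem chebParity (x : ℝ) : ∀ j : ℕ, (T ℝ j).eval (-x) = (-1)^j * (T ℝ j).eval x := by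
  intro j
  induction j using Nat.twoStepInduction with
  | zero => simp [T_zero]
  | one => simp [T_one]
  | more j ih1 ih2 =>
    push_cast at ih2 ⊢
    rw [chebKey x ((j:ℤ)), chebKey (-x) ((j:ℤ)), ih2, ih1]
    ring

theorem chebOneLeAbs (x : ℝ) (hx : 1 ≤ |x|) (j : ℕ) : 1 ≤ |(T ℝ j).eval x| := by
  rcases le_abs.mp hx with h | h
  · have := (chebGrow x h j).1
    calc (1:ℝ) ≤ (T ℝ j).eval x := this
    _ ≤ |(T ℝ j).eval x| := le_abs_self _
  · have h1 := (chebGrow (-x) h j).1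
    have h2 := chebParity x j
    have h3 : |(T ℝ j).eval (-x)| = |(T ℝ j).eval x| := by
      rw [h2, abs_mul, abs_pow, abs_neg, abs_one, one_pow, one_mul]
    calc (1:ℝ) ≤ (T ℝ j).eval (-x) := h1
    _ ≤ |(T ℝ j).eval (-x)| := le_abs_self _
    _ = _ := h3

theorem chebAbsLe (j : ℕ) (x : ℝ) (h : |x| ≤ 1) : |(T ℝ j).eval x| ≤ 1 := by
  have h1 : -1 ≤ x := by cases abs_le.mp h; linarith
  have h2 : x ≤ 1 := (abs_le.mp h).2
  have h3 := T_real_cos (Real.arccos x) (j:ℤ)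
  rw [Real.cos_arccos h1 h2] at h3
  rw [h3]; exact Real.abs_cos_le_one _

theorem chebDeg : ∀ j : ℕ, (T ℝ j).natDegree ≤ j := by
  intro j
  induction j using Nat.twoStepInduction with
  | zero => simp [T_zero]
  | one => simp [T_one, natDegree_X_le]
  | more j ih1 ih2 =>
    push_cast
    rw [T_add_two]
    apply le_trans (natDegree_sub_le _ _)
    rw [show ((j:ℤ)+1) = ((j+1:ℕ):ℤ) by push_cast; ring]
    refine max_le ?_ (le_trans ih1 (by omega))
    calc (2 * X * T ℝ ((j+1:ℕ):ℤ)).natDegree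
        ≤ (2*X : ℝ[X]).natDegree + (T ℝ ((j+1:ℕ):ℤ)).natDegree := natDegree_mul_le
    _ ≤ 1 + (j+1) := by
        have : (2*X : ℝ[X]).natDegree ≤ 1 := le_trans natDegree_mul_le (by simp [natDegree_X_le])
        omega
    _ ≤ j + 2 := by omega

theorem polyChoice (m : ℕ) (p : Polynomial ℝ) (hdeg : p.natDegree ≤ m)
    (hp1 : p.eval 1 = 1) :
    ∃ c : Fin m → ℝ, ∀ t : ℝ, t ≠ 0 →
      t^m - (t-1) * (∑ l : Fin m, c l * t^(l:ℕ)) = t^m * p.eval (1/t) := by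
  set Q : Polynomial ℝ := ∑ j ∈ range (m+1), C (p.coeff j) * X^(m-j) with hQ
  have hpev : ∀ s : ℝ, p.eval s = ∑ j ∈ range (m+1), p.coeff j * s^j := fun s =>
    p.eval_eq_sum_range' (Nat.lt_succ_of_le hdeg) s
  have hQeval : ∀ t : ℝ, t ≠ 0 → Q.eval t = t^m * p.eval (1/t) := by
    intro t ht
    rw [hQ, eval_finset_sum, hpev, Finset.mul_sum]
    refine Finset.sum_congr rfl fun j hj => ?_
    have hjm : j ≤ m := by simpa [Nat.lt_succ_iff] using hj
    rw [eval_mul, eval_C, eval_pow, eval_X]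
    have h4 : t ^ (m - j) * t ^ j = t ^ m := by
      rw [← pow_add]; congr 1; omega
    have h5 : t^m * ((t:ℝ)^j)⁻¹ = t^(m-j) := by
      rw [← h4]; field_simp
    rw [one_div, inv_pow, ← h5]; ring
  have hQ1 : Q.eval 1 = 1 := by
    have := hQeval 1 one_ne_zero
    simpa [hp1] using this
  have hroot : (X^m - Q).IsRoot 1 := by
    simp [IsRoot, hQ1]
  obtain ⟨r, hr⟩ := (dvd_iff_isRoot.mpr hroot : (X - C 1) ∣ (X^m - Q))
  have hQdeg : Q.natDegree ≤ m := by
    refine natDegree_sum_le_of_forall_le _ _ fun j hj => ?_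
    exact le_trans (natDegree_C_mul_le _ _) (by simp [natDegree_X_pow])
  have hrsum : ∀ t : ℝ, r.eval t = ∑ l : Fin m, r.coeff l * t^(l:ℕ) := by
    intro t
    by_cases hr0 : r = 0
    · simp [hr0]
    · have hdr : r.natDegree < m := by
        have h1 : (X^m - Q).natDegree ≤ m := by
          refine le_trans (natDegree_sub_le _ _) ?_
          simp [natDegree_X_pow, hQdeg]
        have h2 : (X - C (1:ℝ)) ≠ 0 := X_sub_C_ne_zero 1
        have h3 := natDegree_mul h2 hr0
        rw [← hr] at h3
        have h4 : (X - C (1:ℝ)).natDegree = 1 := natDegree_X_sub_C 1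
        omega
      rw [r.eval_eq_sum_range' hdr t, Fin.sum_univ_eq_sum_range (fun l => r.coeff l * t^l) m]
  refine ⟨fun l => r.coeff l, fun t ht => ?_⟩
  have h6 := congrArg (Polynomial.eval t) hr
  simp only [eval_sub, eval_mul, eval_pow, eval_X, eval_C] at h6
  rw [← hrsum t, ← hQeval t ht]
  linarith [h6]


noncomputable def enorm {n : ℕ} (v : Fin n → ℝ) : ℝ :=
  Real.sqrt (∑ i, v i ^ 2)

theorem enorm_eq_dot {n : ℕ} (v : Fin n → ℝ) : _root_.enorm v = Real.sqrt (v ⬝ᵥ v) := by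
  unfold _root_.enorm dotProduct; congr 1; exact Finset.sum_congr rfl fun i _ => (sq (v i))

theorem enorm_orth {n : ℕ} (u w : Fin n → ℝ) (h : u ⬝ᵥ w = 0) :
    _root_.enorm u ≤ _root_.enorm (u + w) := by
  unfold _root_.enorm
  apply Real.sqrt_le_sqrt
  have h1 : ∑ i, (u + w) i ^ 2 = ∑ i, u i ^ 2 + 2 * (u ⬝ᵥ w) + ∑ i, w i ^ 2 := by
    simp only [dotProduct, Finset.mul_sum, ← Finset.sum_add_distrib, Pi.add_apply]
    exact Finset.sum_congr rfl fun i _ => by ring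
  have h2 : (0:ℝ) ≤ ∑ i, w i ^ 2 := Finset.sum_nonneg fun i _ => sq_nonneg _
  rw [h1, h]
  linarith

theorem enorm_mulVec_orth {n : ℕ} (W : Matrix (Fin n) (Fin n) ℝ) (hW1 : Wᵀ * W = 1)
    (v : Fin n → ℝ) : _root_.enorm (W *ᵥ v) = _root_.enorm v := by
  rw [enorm_eq_dot, enorm_eq_dot]
  congr 1
  have h1 : W *ᵥ v = v ᵥ* Wᵀ := by rw [← mulVec_transpose, transpose_transpose]
  rw [dotProduct_mulVec, h1, vecMul_vecMul, hW1, vecMul_one]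

theorem enorm_scale_le {n : ℕ} (v w : Fin n → ℝ) (c : ℝ) (hc : 0 ≤ c)
    (h : ∀ i, v i ^ 2 ≤ (c * w i) ^ 2) : _root_.enorm v ≤ c * _root_.enorm w := by
  unfold _root_.enorm
  have h1 : ∑ i, v i ^ 2 ≤ ∑ i, c^2 * w i ^ 2 :=
    Finset.sum_le_sum fun i _ => by nlinarith [h i]
  calc Real.sqrt (∑ i, v i ^ 2) ≤ Real.sqrt (∑ i, c^2 * w i ^2) := Real.sqrt_le_sqrt h1
  _ = c * Real.sqrt (∑ i, w i ^2) := by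
      rw [← Finset.mul_sum, Real.sqrt_mul (sq_nonneg c), Real.sqrt_sq hc]

theorem mulVec_col_sum {n m' : ℕ} (N : Matrix (Fin n) (Fin n) ℝ)
    (M : Matrix (Fin n) (Fin m') ℝ) (c : Fin m' → ℝ) (i : Fin n) :
    (N *ᵥ (M *ᵥ c)) i = ∑ l, c l * (N *ᵥ (fun i' => M i' l)) i := by
  simp only [mulVec, dotProduct, Finset.mul_sum]
  rw [Finset.sum_comm]
  exact Finset.sum_congr rfl fun l _ => Finset.sum_congr rfl fun j _ => by ring

set_option maxHeartbeats 2000000 in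
theorem stmt9 {n m k : ℕ} (hn : 0 < n) (hm : 0 < m) (hmk : m ≤ k)
    (a b : ℝ) (hab : a < b)
    (h0 : (0 : ℝ) ∉ Set.Icc a b) (h1 : (1 : ℝ) ∉ Set.Icc a b)
    (W Λ A P : Matrix (Fin n) (Fin n) ℝ) (d σ : Fin n → ℝ)
    (hΛ : Λ = Matrix.diagonal d)
    (hW1 : Wᵀ * W = 1) (hW2 : W * Wᵀ = 1)
    (hA : A = W * Λ * Wᵀ)
    (hP : P = W * Matrix.diagonal σ * Wᵀ)
    (hσ : ∀ i, 0 < σ i)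
    (hd : ∀ i, d i ∈ Set.Icc a b)
    (rhs xstar : Fin n → ℝ) (hfix : xstar = A.mulVec xstar + rhs)
    (x : ℕ → Fin n → ℝ)
    (hx : ∀ j < k, x (j + 1) = A.mulVec (x j) + rhs)
    (f : ℕ → Fin n → ℝ)
    (hf : ∀ j, f j = A.mulVec (x j) + rhs - x j)
    (Dk Xk : Matrix (Fin n) (Fin m) ℝ)
    (hDk : Dk = Matrix.of fun i (l : Fin m) => f (k - m + l + 1) i - f (k - m + l) i)
    (hXk : Xk = Matrix.of fun i (l : Fin m) => x (k - m + l + 1) i - x (k - m + l) i)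
    (hDkinv : IsUnit (Dkᵀ * (P * P) * Dk).det)
    (Sk : Matrix (Fin n) (Fin n) ℝ)
    (hSk : Sk = (Xk + Dk) * (Dkᵀ * (P * P) * Dk)⁻¹ * Dkᵀ * (P * P))
    (hxk1 : x (k + 1) = x k + (1 - Sk).mulVec (f k))
    (Dμ : Matrix (Fin n) (Fin n) ℝ)
    (hDμ : Dμ = Λ * (Λ - 1)⁻¹) :
    _root_.enorm ((Matrix.diagonal σ * Dμ⁻¹).mulVec (Wᵀ.mulVec (x (k + 1) - xstar))) ≤
      (⨆ i, |σ i|) *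
        |(Polynomial.Chebyshev.T ℝ m).eval ((2 * a * b - a - b) / (b - a))|⁻¹ *
          _root_.enorm (Dμ⁻¹.mulVec (Wᵀ.mulVec (A.mulVec (x k - xstar)))) := by
  -- scalar basics
  have hba : (0:ℝ) < b - a := by linarith
  have hd0 : ∀ i, d i ≠ 0 := fun i hc => h0 (hc ▸ hd i)
  have hd1 : ∀ i, d i ≠ 1 := fun i hc => h1 (hc ▸ hd i)
  have hcase : 0 < a ∨ b < 0 := by
    by_contra hc
    push_neg at hc
    exact h0 ⟨hc.1, hc.2⟩
  -- error vectors
  set e : ℕ → Fin n → ℝ := fun j => x j - xstar with he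
  have hrhs : rhs = xstar - A *ᵥ xstar := eq_sub_of_add_eq' hfix.symm
  have hstep : ∀ j, j < k → e (j+1) = A *ᵥ (e j) := by
    intro j hj
    show x (j+1) - xstar = A *ᵥ (x j - xstar)
    rw [hx j hj, mulVec_sub, hrhs]
    abel
  have hfe : ∀ j, f j = A *ᵥ (e j) - e j := by
    intro j
    show f j = A *ᵥ (x j - xstar) - (x j - xstar)
    rw [hf j, hrhs, mulVec_sub]
    abel
  set u : Fin n → ℝ := Wᵀ *ᵥ e (k - m) with hu
  -- spectral transport
  have hWA : ∀ v : Fin n → ℝ, Wᵀ *ᵥ (A *ᵥ v) = fun i => d i * (Wᵀ *ᵥ v) i := by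
    intro v
    rw [mulVec_mulVec, hA, hΛ, show Wᵀ * (W * Matrix.diagonal d * Wᵀ)
        = (Wᵀ * W) * Matrix.diagonal d * Wᵀ by noncomm_ring, hW1, one_mul,
      ← mulVec_mulVec]
    funext i
    rw [mulVec_diagonal]
  have hiter : ∀ l, l ≤ m → Wᵀ *ᵥ e (k - m + l) = fun i => d i ^ l * u i := by
    intro l hl
    induction l with
    | zero => funext i; simp [hu]
    | succ l ih =>
      have hlm : l ≤ m := by omega
      have hlt : k - m + l < k := by omega
      rw [show k - m + (l+1) = (k - m + l) + 1 by ring, hstep _ hlt, hWA, ih hlm]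
      funext i
      simp [pow_succ]
      ring
  have hWf : ∀ l, l ≤ m → Wᵀ *ᵥ f (k - m + l) = fun i => (d i - 1) * d i ^ l * u i := by
    intro l hl
    rw [hfe, mulVec_sub, hWA, hiter l hl]
    funext i
    simp
    ring
  have hWfk : Wᵀ *ᵥ f k = fun i => (d i - 1) * d i ^ m * u i := by
    have := hWf m le_rfl
    rwa [Nat.sub_add_cancel hmk] at this
  have hWek : Wᵀ *ᵥ e k = fun i => d i ^ m * u i := by
    have := hiter m le_rfl
    rwa [Nat.sub_add_cancel hmk] at this
  -- column formulas
  have hWD : ∀ c : Fin m → ℝ, Wᵀ *ᵥ (Dk *ᵥ c)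
      = fun i => (d i - 1)^2 * u i * ∑ l : Fin m, c l * d i ^ (l:ℕ) := by
    intro c
    funext i
    rw [mulVec_col_sum]
    have hcol : ∀ l : Fin m, (Wᵀ *ᵥ (fun i' => Dk i' l)) i
        = (d i - 1)^2 * d i ^ (l:ℕ) * u i := by
      intro l
      have hfun : (fun i' => Dk i' l) = f (k - m + l + 1) - f (k - m + l) := by
        funext i'
        rw [hDk]
        rfl
      rw [hfun, mulVec_sub, show k - m + (l:ℕ) + 1 = k - m + ((l:ℕ)+1) by ring]
      have h1 := hWf ((l:ℕ)+1) (by omega)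
      have h2 := hWf (l:ℕ) (by omega)
      rw [Pi.sub_apply, h1, h2]
      simp only [pow_succ]
      ring
    rw [Finset.sum_congr rfl fun l _ => by rw [hcol l]]
    rw [Finset.mul_sum]
    exact Finset.sum_congr rfl fun l _ => by ring
  have hWXD : ∀ c : Fin m → ℝ, Wᵀ *ᵥ ((Xk + Dk) *ᵥ c)
      = fun i => (d i - 1) * d i * u i * ∑ l : Fin m, c l * d i ^ (l:ℕ) := by
    intro c
    funext i
    rw [mulVec_col_sum]
    have hcol : ∀ l : Fin m, (Wᵀ *ᵥ (fun i' => (Xk + Dk) i' l)) i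
        = (d i - 1) * d i ^ ((l:ℕ)+1) * u i := by
      intro l
      have hfun : (fun i' => (Xk + Dk) i' l)
          = (e (k - m + l + 1) - e (k - m + l)) + (f (k - m + l + 1) - f (k - m + l)) := by
        funext i'
        simp only [Matrix.add_apply, hXk, hDk, Matrix.of_apply, he, Pi.add_apply, Pi.sub_apply]
        ring
      rw [hfun, show k - m + (l:ℕ) + 1 = k - m + ((l:ℕ)+1) from by omega]
      have h1 := hWf ((l:ℕ)+1) (by omega)
      have h2 := hWf (l:ℕ) (by omega)
      have h3 := hiter ((l:ℕ)+1) (by omega)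
      have h4 := hiter (l:ℕ) (by omega)
      rw [mulVec_add Wᵀ (e (k - m + ((l:ℕ)+1)) - e (k - m + (l:ℕ)))
          (f (k - m + ((l:ℕ)+1)) - f (k - m + (l:ℕ))),
        mulVec_sub Wᵀ (e (k - m + ((l:ℕ)+1))) (e (k - m + (l:ℕ))),
        mulVec_sub Wᵀ (f (k - m + ((l:ℕ)+1))) (f (k - m + (l:ℕ)))]
      simp only [Pi.add_apply, Pi.sub_apply, h1, h2, h3, h4]
      simp only [pow_succ]
      ring
    rw [Finset.sum_congr rfl fun l _ => by rw [hcol l]]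
    rw [Finset.mul_sum]
    exact Finset.sum_congr rfl fun l _ => by rw [pow_succ]; ring
  -- the least-squares coefficient vector
  set G : Matrix (Fin m) (Fin m) ℝ := Dkᵀ * (P * P) * Dk with hG
  set β : Fin m → ℝ := G⁻¹ *ᵥ (Dkᵀ *ᵥ ((P * P) *ᵥ f k)) with hβ
  have horth : Dkᵀ *ᵥ ((P * P) *ᵥ (f k - Dk *ᵥ β)) = 0 := by
    have h1 : Dkᵀ *ᵥ ((P * P) *ᵥ (Dk *ᵥ β)) = G *ᵥ β := by
      rw [mulVec_mulVec, mulVec_mulVec, hG, Matrix.mul_assoc]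
    have h2 : G *ᵥ β = Dkᵀ *ᵥ ((P * P) *ᵥ f k) := by
      rw [hβ, mulVec_mulVec, Matrix.mul_nonsing_inv _ hDkinv, one_mulVec, mulVec_mulVec]
    rw [mulVec_sub, mulVec_sub, h1, h2, mulVec_mulVec, sub_self]
  have hek1 : e (k + 1) = A *ᵥ e k - (Xk + Dk) *ᵥ β := by
    show x (k+1) - xstar = _
    rw [hxk1, sub_mulVec, one_mulVec]
    have hSkf : Sk *ᵥ f k = (Xk + Dk) *ᵥ β := by
      rw [hSk, hβ, hG]
      rw [← mulVec_mulVec, ← mulVec_mulVec, ← mulVec_mulVec]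
    rw [hSkf]
    have hfk := hfe k
    show x k + (f k - (Xk + Dk) *ᵥ β) - xstar = A *ᵥ (x k - xstar) - (Xk + Dk) *ᵥ β
    rw [hfk]
    show x k + ((A *ᵥ (x k - xstar) - (x k - xstar)) - (Xk + Dk) *ᵥ β) - xstar = _
    abel
  -- diagonal inverse matrices
  have hΛ1 : Λ - 1 = Matrix.diagonal (fun i => d i - 1) := by
    rw [hΛ, ← Matrix.diagonal_one, Matrix.diagonal_sub]
  have hΛ1inv : (Λ - 1)⁻¹ = Matrix.diagonal (fun i => (d i - 1)⁻¹) := by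
    rw [hΛ1]
    apply Matrix.inv_eq_right_inv
    rw [Matrix.diagonal_mul_diagonal]
    rw [show (fun i => (d i - 1) * (d i - 1)⁻¹) = fun _ => (1:ℝ) from funext fun i =>
      mul_inv_cancel₀ (sub_ne_zero.mpr (hd1 i)), Matrix.diagonal_one]
  have hDμdiag : Dμ = Matrix.diagonal (fun i => d i * (d i - 1)⁻¹) := by
    rw [hDμ, hΛ1inv, hΛ, Matrix.diagonal_mul_diagonal]
  have hDμinv : Dμ⁻¹ = Matrix.diagonal (fun i => (d i - 1) * (d i)⁻¹) := by
    rw [hDμdiag]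
    apply Matrix.inv_eq_right_inv
    rw [Matrix.diagonal_mul_diagonal]
    rw [show (fun i => d i * (d i - 1)⁻¹ * ((d i - 1) * (d i)⁻¹)) = fun _ => (1:ℝ) from
      funext fun i => by
        have e1 : d i * (d i - 1)⁻¹ * ((d i - 1) * (d i)⁻¹)
            = (d i * (d i)⁻¹) * ((d i - 1) * (d i - 1)⁻¹) := by ring
        rw [e1, mul_inv_cancel₀ (hd0 i), mul_inv_cancel₀ (sub_ne_zero.mpr (hd1 i)), one_mul],
      Matrix.diagonal_one]
  -- identification of the LHS vector
  have hLHSvec : (Matrix.diagonal σ * Dμ⁻¹) *ᵥ (Wᵀ *ᵥ (x (k + 1) - xstar))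
      = fun i => σ i * (Wᵀ *ᵥ (f k - Dk *ᵥ β)) i := by
    have hstep1 : Wᵀ *ᵥ (x (k+1) - xstar) = (fun i => d i * (d i ^ m * u i))
        - (fun i => (d i - 1) * d i * u i * ∑ l : Fin m, β l * d i ^ (l:ℕ)) := by
      show Wᵀ *ᵥ e (k+1) = _
      rw [hek1, mulVec_sub Wᵀ (A *ᵥ e k) ((Xk + Dk) *ᵥ β), hWA, hWek, hWXD]
    rw [hstep1, hDμinv, Matrix.diagonal_mul_diagonal]
    funext i
    rw [mulVec_diagonal, mulVec_sub Wᵀ (f k) (Dk *ᵥ β)]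
    simp only [Pi.sub_apply, hWfk, hWD]
    have hdi : (d i)⁻¹ * d i = 1 := inv_mul_cancel₀ (hd0 i)
    linear_combination (σ i * (d i - 1) *
      (d i ^ m * u i - (d i - 1) * u i * ∑ l : Fin m, β l * d i ^ (l:ℕ))) * hdi
  -- identification of the RHS vector
  have hRHSvec : Dμ⁻¹ *ᵥ (Wᵀ *ᵥ (A *ᵥ (x k - xstar)))
      = fun i => (d i - 1) * d i ^ m * u i := by
    have hWe : Wᵀ *ᵥ (A *ᵥ (x k - xstar)) = Wᵀ *ᵥ (A *ᵥ e k) := rfl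
    rw [hWe, hWA, hWek, hDμinv]
    funext i
    rw [mulVec_diagonal]
    have hdi : (d i)⁻¹ * d i = 1 := inv_mul_cancel₀ (hd0 i)
    linear_combination ((d i - 1) * d i ^ m * u i) * hdi
  -- symmetry of P and norm transfer
  have hPsym : Pᵀ = P := by
    rw [hP]
    rw [Matrix.transpose_mul, Matrix.transpose_mul, Matrix.transpose_transpose,
      Matrix.diagonal_transpose, Matrix.mul_assoc]
  have hPnorm : ∀ w : Fin n → ℝ, P *ᵥ w = W *ᵥ (fun i => σ i * (Wᵀ *ᵥ w) i) := by
    intro w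
    rw [hP, ← mulVec_mulVec, ← mulVec_mulVec]
    have hdg : (Matrix.diagonal σ) *ᵥ (Wᵀ *ᵥ w) = fun i => σ i * (Wᵀ *ᵥ w) i := by
      funext i
      rw [mulVec_diagonal]
    rw [hdg]
  have henP : ∀ w : Fin n → ℝ, _root_.enorm (fun i => σ i * (Wᵀ *ᵥ w) i) = _root_.enorm (P *ᵥ w) := by
    intro w
    rw [hPnorm w, enorm_mulVec_orth W hW1]
  -- least squares optimality
  have hopt : ∀ c : Fin m → ℝ,
      _root_.enorm (P *ᵥ (f k - Dk *ᵥ β)) ≤ _root_.enorm (P *ᵥ (f k - Dk *ᵥ c)) := by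
    intro c
    have hdecomp : P *ᵥ (f k - Dk *ᵥ c)
        = P *ᵥ (f k - Dk *ᵥ β) + P *ᵥ (Dk *ᵥ (β - c)) := by
      rw [← mulVec_add]
      congr 1
      rw [mulVec_sub Dk β c]
      abel
    rw [hdecomp]
    apply enorm_orth
    rw [dotProduct_mulVec, ← mulVec_transpose P (P *ᵥ (f k - Dk *ᵥ β)), hPsym,
      mulVec_mulVec, dotProduct_mulVec, ← mulVec_transpose Dk ((P * P) *ᵥ (f k - Dk *ᵥ β)),
      horth, zero_dotProduct]
  -- Chebyshev data
  set K : ℝ := (Polynomial.Chebyshev.T ℝ m).eval ((2 * a * b - a - b) / (b - a)) with hK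
  have h1ab : 1 < a ∨ b < 1 := by
    by_contra hcon
    push_neg at hcon
    exact h1 ⟨hcon.1, hcon.2⟩
  have hKarg : (1:ℝ) ≤ |(2 * a * b - a - b) / (b - a)| := by
    rw [abs_div, abs_of_pos hba, le_div_iff₀ hba, one_mul]
    rcases hcase with hca | hcb
    · rcases h1ab with h1a | h1b
      · exact le_abs.mpr (Or.inl (by nlinarith))
      · exact le_abs.mpr (Or.inr (by nlinarith))
    · exact le_abs.mpr (Or.inl (by nlinarith))
  have hKabs : 1 ≤ |K| := chebOneLeAbs _ hKarg m
  have hKne : K ≠ 0 := by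
    intro hcon
    rw [hcon, abs_zero] at hKabs
    linarith
  set L : Polynomial ℝ := Polynomial.C (2*a*b/(b-a)) * Polynomial.X
      + Polynomial.C (-(a+b)/(b-a)) with hL
  have hLeval : ∀ s : ℝ, L.eval s = (2*a*b*s - (a+b))/(b-a) := by
    intro s
    rw [hL]
    simp only [Polynomial.eval_add, Polynomial.eval_mul, Polynomial.eval_C, Polynomial.eval_X]
    field_simp
    ring
  have hLdeg : L.natDegree ≤ 1 := by
    rw [hL]
    refine le_trans (Polynomial.natDegree_add_le _ _) ?_
    simp only [Polynomial.natDegree_C, max_le_iff]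
    constructor
    · exact le_trans (Polynomial.natDegree_C_mul_le _ _) Polynomial.natDegree_X_le
    · omega
  set p : Polynomial ℝ := Polynomial.C K⁻¹ * ((Polynomial.Chebyshev.T ℝ m).comp L) with hp
  have hpeval : ∀ s : ℝ, p.eval s = K⁻¹ * (Polynomial.Chebyshev.T ℝ m).eval (L.eval s) := by
    intro s
    rw [hp, Polynomial.eval_mul, Polynomial.eval_C, Polynomial.eval_comp]
  have hp1 : p.eval 1 = 1 := by
    rw [hpeval, hLeval, show (2*a*b*1 - (a+b))/(b-a) = (2 * a * b - a - b) / (b - a) by ring,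
      ← hK]
    exact inv_mul_cancel₀ hKne
  have hpdeg : p.natDegree ≤ m := by
    rw [hp]
    refine le_trans (Polynomial.natDegree_C_mul_le _ _) ?_
    refine le_trans Polynomial.natDegree_comp_le ?_
    calc (Polynomial.Chebyshev.T ℝ m).natDegree * L.natDegree ≤ m * 1 :=
      Nat.mul_le_mul (chebDeg m) hLdeg
    _ = m := by omega
  obtain ⟨c, hc⟩ := polyChoice m p hpdeg hp1
  -- bound for p on the spectrum
  have hLbound : ∀ i, |L.eval (1 / d i)| ≤ 1 := by
    intro i
    obtain ⟨hai, hbi⟩ := hd i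
    rw [hLeval, abs_div, abs_of_pos hba, div_le_one hba, abs_le]
    rcases hcase with hca | hcb
    · have ht : 0 < d i := lt_of_lt_of_le hca hai
      have h5 : 2*a*b*(1/d i) ≤ 2*b := by
        rw [mul_one_div, div_le_iff₀ ht]
        nlinarith
      have h6 : 2*a ≤ 2*a*b*(1/d i) := by
        rw [mul_one_div, le_div_iff₀ ht]
        nlinarith
      constructor <;> nlinarith
    · have ht : d i < 0 := lt_of_le_of_lt hbi hcb
      have h5 : 2*a*b*(1/d i) ≤ 2*b := by
        rw [mul_one_div, div_le_iff_of_neg ht]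
        nlinarith
      have h6 : 2*a ≤ 2*a*b*(1/d i) := by
        rw [mul_one_div, le_div_iff_of_neg ht]
        nlinarith
      constructor <;> nlinarith
  have hpbound : ∀ i, |p.eval (1 / d i)| ≤ |K|⁻¹ := by
    intro i
    rw [hpeval, abs_mul, abs_inv]
    have h7 := chebAbsLe m (L.eval (1 / d i)) (hLbound i)
    calc |K|⁻¹ * |(Polynomial.Chebyshev.T ℝ m).eval (L.eval (1 / d i))| ≤ |K|⁻¹ * 1 :=
      mul_le_mul_of_nonneg_left h7 (inv_nonneg.mpr (abs_nonneg K))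
    _ = |K|⁻¹ := mul_one _
  -- sup bound
  have hSbd : ∀ i, |σ i| ≤ ⨆ i', |σ i'| := fun i =>
    le_ciSup (Finite.bddAbove_range fun i' => |σ i'|) i
  have hSnn : 0 ≤ ⨆ i', |σ i'| := le_trans (abs_nonneg _) (hSbd ⟨0, hn⟩)
  -- final chain
  rw [hLHSvec, hRHSvec]
  calc _root_.enorm (fun i => σ i * (Wᵀ *ᵥ (f k - Dk *ᵥ β)) i)
      = _root_.enorm (P *ᵥ (f k - Dk *ᵥ β)) := henP _
    _ ≤ _root_.enorm (P *ᵥ (f k - Dk *ᵥ c)) := hopt c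
    _ = _root_.enorm (fun i => σ i * (Wᵀ *ᵥ (f k - Dk *ᵥ c)) i) := (henP _).symm
    _ ≤ (⨆ i', |σ i'|) * |K|⁻¹ * _root_.enorm (fun i => (d i - 1) * d i ^ m * u i) := ?_
  apply enorm_scale_le _ _ _ (mul_nonneg hSnn (inv_nonneg.mpr (abs_nonneg K)))
  intro i
  have hvc : (Wᵀ *ᵥ (f k - Dk *ᵥ c)) i
      = (d i - 1) * (d i ^ m * p.eval (1 / d i)) * u i := by
    rw [mulVec_sub Wᵀ (f k) (Dk *ᵥ c)]
    simp only [Pi.sub_apply, hWfk, hWD]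
    have hkey := hc (d i) (hd0 i)
    linear_combination ((d i - 1) * u i) * hkey
  rw [hvc]
  have h8 := hpbound i
  have h9 := hSbd i
  have h10 : σ i ^ 2 * p.eval (1 / d i) ^ 2 ≤ (⨆ i', |σ i'|) ^ 2 * (|K|⁻¹) ^ 2 := by
    have hs2 : σ i ^ 2 ≤ (⨆ i', |σ i'|) ^ 2 := by
      rw [← sq_abs (σ i)]
      exact pow_le_pow_left₀ (abs_nonneg _) h9 2
    have hp2 : p.eval (1 / d i) ^ 2 ≤ (|K|⁻¹) ^ 2 := by
      rw [← sq_abs (p.eval (1 / d i))]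
      exact pow_le_pow_left₀ (abs_nonneg _) h8 2
    exact mul_le_mul hs2 hp2 (sq_nonneg _) (sq_nonneg _)
  have h11 := mul_le_mul_of_nonneg_right h10 (sq_nonneg ((d i - 1) * d i ^ m * u i))
  nlinarith [h11]
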